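/- Let l, n be positive real numbers and m a complex number with l·n > m·conj(m) (= |m|²). Define the 5×5 Hermitian matrix B = [[n³·n, -n³·m, 0, 0, 0], [-n³·m̄, n³·l + l·n²·n, -l·n²·m, 0, 0], [0, -l·n²·m̄, l·n²·l + l²·n·n, -l²·n·m, 0], [0, 0, -l²·n·m̄, l²·n·l + l³·n, -l³·m], [0, 0, 0, -l³·m̄, l³·l]] (i.e. the matrix B^t of Corollary 3.13 with l^t = n^t replaced by the scalars l, n, m^t = m, and all coordinate components equal to these scalars; formally: B₁₁ = n⁴, B₁₂ = -n³m, B₂₂ = n³l + ln³, B₂₃ = -ln²m, B₃₃ = ln²l + l²n², B₃₄ = -l²nm, B₄₄ = l²nl + l³n, B₄₅ = -l³m, B₅₅ = l⁴, with conjugate-symmetric lower entries and zeros elsewhere). Then det B = 4·l⁸·n⁸·(l·n - |m|²)·(2·l·n - |m|²), and B is positive definite. -/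

import Mathlib

open Matrix Complex ComplexOrder

private lemma real_key8 (l n M A B t : ℝ) (hl : 0 < l) (hn : 0 < n) (hM : 0 ≤ M)
    (hMln : M < l * n) (hA : 0 ≤ A) (hB : 0 ≤ B) (ht : t ^ 2 ≤ M * A * B) :
    2 * t ≤ n * A + l * B ∧ (0 < A ∨ 0 < B → 2 * t < n * A + l * B) := by
  rcases le_or_gt t 0 with h0 | h0
  · constructor
    · nlinarith [mul_nonneg hn.le hA, mul_nonneg hl.le hB]
    · rintro (h | h) <;> nlinarith [mul_nonneg hn.le hA, mul_nonneg hl.le hB]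
  · have hAB : 0 < A * B := by nlinarith
    have hA' : 0 < A := by nlinarith
    have hB' : 0 < B := by nlinarith
    have hsq : (2 * t) ^ 2 < (n * A + l * B) ^ 2 := by nlinarith [sq_nonneg (n * A - l * B)]
    have hlt : 2 * t < n * A + l * B := by
      have := lt_of_pow_lt_pow_left₀ 2 (by positivity : (0:ℝ) ≤ n * A + l * B) hsq
      linarith
    exact ⟨hlt.le, fun _ => hlt⟩

private lemma re_sq_le8 (m a b : ℂ) :
    (m * (starRingEnd ℂ) a * b).re ^ 2 ≤
      Complex.normSq m * Complex.normSq a * Complex.normSq b := by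
  have h1 : Complex.normSq (m * (starRingEnd ℂ) a * b) =
      Complex.normSq m * Complex.normSq a * Complex.normSq b := by
    simp [Complex.normSq_mul, Complex.normSq_conj]
  have h2 : (m * (starRingEnd ℂ) a * b).re ^ 2 ≤ Complex.normSq (m * (starRingEnd ℂ) a * b) := by
    rw [Complex.normSq_apply]; nlinarith [sq_nonneg (m * (starRingEnd ℂ) a * b).im]
  linarith

set_option maxHeartbeats 2000000 in
/-- The principal symbol matrix `B^t` of the symmetric-hyperbolic curvature system:
its determinant is `4 l⁸ n⁸ (ln - |m|²)(2ln - |m|²)` and it is positive definite. -/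
theorem stmt8 (l n : ℝ) (m : ℂ) (hl : 0 < l) (hn : 0 < n)
    (hmn : Complex.normSq m < l * n) :
    let B : Matrix (Fin 5) (Fin 5) ℂ :=
      !![(n:ℂ)^4, -((n:ℂ)^3*m), 0, 0, 0;
         -((n:ℂ)^3 * (starRingEnd ℂ) m), 2*(l:ℂ)*(n:ℂ)^3, -((l:ℂ)*(n:ℂ)^2*m), 0, 0;
         0, -((l:ℂ)*(n:ℂ)^2*(starRingEnd ℂ) m), 2*(l:ℂ)^2*(n:ℂ)^2, -((l:ℂ)^2*(n:ℂ)*m), 0;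
         0, 0, -((l:ℂ)^2*(n:ℂ)*(starRingEnd ℂ) m), 2*(l:ℂ)^3*(n:ℂ), -((l:ℂ)^3*m);
         0, 0, 0, -((l:ℂ)^3*(starRingEnd ℂ) m), (l:ℂ)^4]
    B.det = ((4 * l^8 * n^8 * (l*n - Complex.normSq m) * (2*l*n - Complex.normSq m) : ℝ) : ℂ)
      ∧ B.PosDef := by
  intro B
  constructor
  · show B.det = _
    push_cast
    rw [show ((Complex.normSq m : ℝ) : ℂ) = m * (starRingEnd ℂ) m from (Complex.mul_conj m).symm]
    simp [B, Matrix.det_succ_row_zero, Fin.sum_univ_succ, Fin.succAbove]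
    ring
  · rw [Matrix.posDef_iff_dotProduct_mulVec]
    constructor
    · ext i j
      fin_cases i <;> fin_cases j <;>
        simp [B, Matrix.conjTranspose_apply, Complex.conj_ofReal, _root_.map_mul, map_pow,
          mul_comm, Matrix.vecHead, Matrix.vecTail]
    · intro x hx
      set t0 := (m * (starRingEnd ℂ) (x 0) * x 1).re
      set t1 := (m * (starRingEnd ℂ) (x 1) * x 2).re
      set t2 := (m * (starRingEnd ℂ) (x 2) * x 3).re
      set t3 := (m * (starRingEnd ℂ) (x 3) * x 4).re
      have hS : dotProduct (star x) (B *ᵥ x) =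
          ((n^3 * (n * Complex.normSq (x 0) + l * Complex.normSq (x 1) - 2 * t0)
          + (l*n^2) * (n * Complex.normSq (x 1) + l * Complex.normSq (x 2) - 2 * t1)
          + (l^2*n) * (n * Complex.normSq (x 2) + l * Complex.normSq (x 3) - 2 * t2)
          + l^3 * (n * Complex.normSq (x 3) + l * Complex.normSq (x 4) - 2 * t3) : ℝ) : ℂ) := by
        simp [B, dotProduct, Matrix.mulVec, Fin.sum_univ_five, Matrix.vecHead,
          Matrix.vecTail]
        apply Complex.ext <;>
          simp [t0, t1, t2, t3, Complex.normSq_apply, Complex.add_re, Complex.add_im,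
            Complex.mul_re, Complex.mul_im, Complex.conj_re, Complex.conj_im, Complex.ofReal_pow,
            Matrix.vecHead, Matrix.vecTail, Complex.sub_re, Complex.sub_im, pow_succ] <;>
          ring
      rw [hS]
      rw [Complex.zero_lt_real]
      have hMn := Complex.normSq_nonneg m
      have h0 := real_key8 l n (Complex.normSq m) (Complex.normSq (x 0)) (Complex.normSq (x 1))
        t0 hl hn hMn hmn (Complex.normSq_nonneg _) (Complex.normSq_nonneg _) (re_sq_le8 m _ _)
      have h1 := real_key8 l n (Complex.normSq m) (Complex.normSq (x 1)) (Complex.normSq (x 2))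
        t1 hl hn hMn hmn (Complex.normSq_nonneg _) (Complex.normSq_nonneg _) (re_sq_le8 m _ _)
      have h2 := real_key8 l n (Complex.normSq m) (Complex.normSq (x 2)) (Complex.normSq (x 3))
        t2 hl hn hMn hmn (Complex.normSq_nonneg _) (Complex.normSq_nonneg _) (re_sq_le8 m _ _)
      have h3 := real_key8 l n (Complex.normSq m) (Complex.normSq (x 3)) (Complex.normSq (x 4))
        t3 hl hn hMn hmn (Complex.normSq_nonneg _) (Complex.normSq_nonneg _) (re_sq_le8 m _ _)
      have hc0 : (0:ℝ) < n^3 := by positivity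
      have hc1 : (0:ℝ) < l*n^2 := by positivity
      have hc2 : (0:ℝ) < l^2*n := by positivity
      have hc3 : (0:ℝ) < l^3 := by positivity
      obtain ⟨i, hi⟩ := Function.ne_iff.mp hx
      have hpos : ∀ j : Fin 5, x j ≠ 0 → (0:ℝ) < Complex.normSq (x j) :=
        fun j hj => Complex.normSq_pos.mpr hj
      have key : (0:ℝ) < n^3 * (n * Complex.normSq (x 0) + l * Complex.normSq (x 1) - 2 * t0)
          + (l*n^2) * (n * Complex.normSq (x 1) + l * Complex.normSq (x 2) - 2 * t1)
          + (l^2*n) * (n * Complex.normSq (x 2) + l * Complex.normSq (x 3) - 2 * t2)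
          + l^3 * (n * Complex.normSq (x 3) + l * Complex.normSq (x 4) - 2 * t3) := by
        fin_cases i
        · have := h0.2 (Or.inl (hpos 0 hi))
          nlinarith [mul_nonneg hc1.le (by linarith [h1.1] : (0:ℝ) ≤ n * Complex.normSq (x 1) + l * Complex.normSq (x 2) - 2 * t1),
            mul_nonneg hc2.le (by linarith [h2.1] : (0:ℝ) ≤ n * Complex.normSq (x 2) + l * Complex.normSq (x 3) - 2 * t2),
            mul_nonneg hc3.le (by linarith [h3.1] : (0:ℝ) ≤ n * Complex.normSq (x 3) + l * Complex.normSq (x 4) - 2 * t3),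
            mul_pos hc0 (by linarith : (0:ℝ) < n * Complex.normSq (x 0) + l * Complex.normSq (x 1) - 2 * t0)]
        · have := h0.2 (Or.inr (hpos 1 hi))
          nlinarith [mul_nonneg hc1.le (by linarith [h1.1] : (0:ℝ) ≤ n * Complex.normSq (x 1) + l * Complex.normSq (x 2) - 2 * t1),
            mul_nonneg hc2.le (by linarith [h2.1] : (0:ℝ) ≤ n * Complex.normSq (x 2) + l * Complex.normSq (x 3) - 2 * t2),
            mul_nonneg hc3.le (by linarith [h3.1] : (0:ℝ) ≤ n * Complex.normSq (x 3) + l * Complex.normSq (x 4) - 2 * t3),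
            mul_pos hc0 (by linarith : (0:ℝ) < n * Complex.normSq (x 0) + l * Complex.normSq (x 1) - 2 * t0)]
        · have := h1.2 (Or.inr (hpos 2 hi))
          nlinarith [mul_nonneg hc0.le (by linarith [h0.1] : (0:ℝ) ≤ n * Complex.normSq (x 0) + l * Complex.normSq (x 1) - 2 * t0),
            mul_nonneg hc2.le (by linarith [h2.1] : (0:ℝ) ≤ n * Complex.normSq (x 2) + l * Complex.normSq (x 3) - 2 * t2),
            mul_nonneg hc3.le (by linarith [h3.1] : (0:ℝ) ≤ n * Complex.normSq (x 3) + l * Complex.normSq (x 4) - 2 * t3),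
            mul_pos hc1 (by linarith : (0:ℝ) < n * Complex.normSq (x 1) + l * Complex.normSq (x 2) - 2 * t1)]
        · have := h2.2 (Or.inr (hpos 3 hi))
          nlinarith [mul_nonneg hc0.le (by linarith [h0.1] : (0:ℝ) ≤ n * Complex.normSq (x 0) + l * Complex.normSq (x 1) - 2 * t0),
            mul_nonneg hc1.le (by linarith [h1.1] : (0:ℝ) ≤ n * Complex.normSq (x 1) + l * Complex.normSq (x 2) - 2 * t1),
            mul_nonneg hc3.le (by linarith [h3.1] : (0:ℝ) ≤ n * Complex.normSq (x 3) + l * Complex.normSq (x 4) - 2 * t3),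
            mul_pos hc2 (by linarith : (0:ℝ) < n * Complex.normSq (x 2) + l * Complex.normSq (x 3) - 2 * t2)]
        · have := h3.2 (Or.inr (hpos 4 hi))
          nlinarith [mul_nonneg hc0.le (by linarith [h0.1] : (0:ℝ) ≤ n * Complex.normSq (x 0) + l * Complex.normSq (x 1) - 2 * t0),
            mul_nonneg hc1.le (by linarith [h1.1] : (0:ℝ) ≤ n * Complex.normSq (x 1) + l * Complex.normSq (x 2) - 2 * t1),
            mul_nonneg hc2.le (by linarith [h2.1] : (0:ℝ) ≤ n * Complex.normSq (x 2) + l * Complex.normSq (x 3) - 2 * t2),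
            mul_pos hc3 (by linarith : (0:ℝ) < n * Complex.normSq (x 3) + l * Complex.normSq (x 4) - 2 * t3)]
      linarith
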